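/- Let B ⊆ ℝ² be a closed set and let W = ℝ² \ B (so W is open). Then for any three points p, q, r ∈ ℝ² there exist a rotation R ∈ SO(2) and a vector v ∈ ℝ² such that the three points R·p + v, R·q + v, R·r + v are all in B or all in W. -/

import Mathlib

noncomputable section

abbrev E2 := EuclideanSpace ℝ (Fin 2)

def Rmat (θ : ℝ) : Matrix (Fin 2) (Fin 2) ℝ :=
  !![Real.cos θ, -Real.sin θ; Real.sin θ, Real.cos θ]

lemma Rmat_mem (θ : ℝ) : Rmat θ ∈ Matrix.specialOrthogonalGroup (Fin 2) ℝ := by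
  rw [Matrix.mem_specialOrthogonalGroup_iff]
  constructor
  · rw [Matrix.mem_orthogonalGroup_iff]
    ext i j
    fin_cases i <;> fin_cases j <;>
      simp [Rmat, Matrix.mul_apply, Fin.sum_univ_two, Matrix.one_apply] <;> ring_nf <;>
      simp [Real.sin_sq_add_cos_sq, Real.cos_sq_add_sin_sq]
  · simp [Rmat, Matrix.det_fin_two]
    ring_nf
    simp [Real.sin_sq_add_cos_sq, Real.cos_sq_add_sin_sq]

def rot (θ : ℝ) (u : E2) : E2 :=
  (WithLp.equiv 2 (Fin 2 → ℝ)).symm ((Rmat θ).mulVec (WithLp.equiv 2 (Fin 2 → ℝ) u))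

lemma rot_apply0 (θ : ℝ) (u : E2) : rot θ u 0 = Real.cos θ * u 0 - Real.sin θ * u 1 := by
  simp [rot, Rmat, Matrix.mulVec, dotProduct, Fin.sum_univ_two,
    Matrix.vecHead, Matrix.vecTail]
  ring

lemma rot_apply1 (θ : ℝ) (u : E2) : rot θ u 1 = Real.sin θ * u 0 + Real.cos θ * u 1 := by
  simp [rot, Rmat, Matrix.mulVec, dotProduct, Fin.sum_univ_two,
    Matrix.vecHead, Matrix.vecTail]

lemma E2ext {a b : E2} (h0 : a 0 = b 0) (h1 : a 1 = b 1) : a = b := by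
  ext i; fin_cases i <;> assumption

lemma E2_add_apply (a b : E2) (i : Fin 2) : (a + b) i = a i + b i := rfl
lemma E2_sub_apply (a b : E2) (i : Fin 2) : (a - b) i = a i - b i := rfl
lemma E2_neg_apply (a : E2) (i : Fin 2) : (-a) i = -(a i) := rfl
lemma E2_smul_apply (c : ℝ) (a : E2) (i : Fin 2) : (c • a) i = c * a i := rfl

lemma rot_sub (θ : ℝ) (u v : E2) : rot θ u - rot θ v = rot θ (u - v) := by
  apply E2ext <;> simp [rot_apply0, rot_apply1, E2_sub_apply] <;> ring

lemma rot_zero (u : E2) : rot 0 u = u := by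
  apply E2ext <;> simp [rot_apply0, rot_apply1]

lemma rot_rot (θ φ : ℝ) (u : E2) : rot θ (rot φ u) = rot (θ + φ) u := by
  apply E2ext <;>
    simp [rot_apply0, rot_apply1, Real.cos_add, Real.sin_add] <;> ring

lemma rot_pi (u : E2) : rot Real.pi u = -u := by
  apply E2ext <;> simp [rot_apply0, rot_apply1, E2_neg_apply]

lemma rot_eq_smul (θ : ℝ) (u : E2) :
    rot θ u = Real.cos θ • u + Real.sin θ • rot (Real.pi / 2) u := by
  apply E2ext <;>
    simp [rot_apply0, rot_apply1, E2_add_apply, E2_smul_apply] <;> ring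

lemma rot_cont (u x : E2) : Continuous fun θ : ℝ => x + rot θ u := by
  have h : (fun θ : ℝ => x + rot θ u)
      = fun θ : ℝ => x + (Real.cos θ • u + Real.sin θ • rot (Real.pi / 2) u) := by
    funext θ; rw [rot_eq_smul]
  rw [h]
  fun_prop

lemma rot_neg_forall' (x : E2) (P : E2 → Prop) (u : E2) :
    (∀ θ, P (x + rot θ (-u))) ↔ (∀ θ, P (x + rot θ u)) := by
  have key : ∀ θ, rot θ (-u) = rot (θ + Real.pi) u := by
    intro θ; rw [← rot_pi u, rot_rot]
  constructor
  · intro H θ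
    have := H (θ - Real.pi)
    rw [key, sub_add_cancel] at this
    exact this
  · intro H θ
    rw [key]
    exact H (θ + Real.pi)

lemma rot_neg_forall_mem (S : Set E2) (x u : E2) :
    (∀ θ : ℝ, x + rot θ (-u) ∈ S) ↔ (∀ θ : ℝ, x + rot θ u ∈ S) :=
  rot_neg_forall' x (fun z => z ∈ S) u

lemma rot_neg_forall_nmem (S : Set E2) (x u : E2) :
    (∀ θ : ℝ, x + rot θ (-u) ∉ S) ↔ (∀ θ : ℝ, x + rot θ u ∉ S) :=
  rot_neg_forall' x (fun z => z ∉ S) u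

lemma cross {B : Set E2} (hB : IsClosed B) {x : E2} (hxG : x ∈ closure Bᶜ) (u w : E2)
    (hG : ∀ y, y ∉ B → ∀ θ : ℝ, y + rot θ u ∈ B ∨ y + rot θ w ∈ B)
    (θ : ℝ) (hθ : x + rot θ u ∉ B) : x + rot θ w ∈ B := by
  have hcl : x + rot θ w ∈ closure B := by
    rw [mem_closure_iff]
    intro O hO hmem
    have hVopen : IsOpen {y : E2 | y + rot θ u ∉ B ∧ y + rot θ w ∈ O} := by
      apply IsOpen.inter
      · exact hB.isOpen_compl.preimage (by fun_prop)
      · exact hO.preimage (by fun_prop)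
    have hxV : x ∈ {y : E2 | y + rot θ u ∉ B ∧ y + rot θ w ∈ O} := ⟨hθ, hmem⟩
    obtain ⟨y, hyV, hyBc⟩ := (mem_closure_iff.mp hxG) _ hVopen hxV
    rcases hG y hyBc θ with h1 | h2
    · exact absurd h1 hyV.1
    · exact ⟨_, hyV.2, h2⟩
  rwa [hB.closure_eq] at hcl

lemma apex {B : Set E2} (hB : IsClosed B) {x : E2} (hxB : x ∈ B) (hxG : x ∈ closure Bᶜ)
    (u w : E2)
    (hF : ∀ θ : ℝ, x + rot θ u ∉ B ∨ x + rot θ w ∉ B)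
    (hG : ∀ y, y ∉ B → ∀ θ : ℝ, y + rot θ u ∈ B ∨ y + rot θ w ∈ B) :
    ((∀ θ : ℝ, x + rot θ u ∈ B) ∧ (∀ θ : ℝ, x + rot θ w ∉ B)) ∨
    ((∀ θ : ℝ, x + rot θ w ∈ B) ∧ (∀ θ : ℝ, x + rot θ u ∉ B)) := by
  have hG' : ∀ y, y ∉ B → ∀ θ : ℝ, y + rot θ w ∈ B ∨ y + rot θ u ∈ B := by
    intro y hy θ; exact (hG y hy θ).symm
  have hd1 : ∀ θ : ℝ, x + rot θ u ∉ B → x + rot θ w ∈ B := cross hB hxG u w hG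
  have hd2 : ∀ θ : ℝ, x + rot θ w ∉ B → x + rot θ u ∈ B := cross hB hxG w u hG'
  set U1 : Set ℝ := {θ | x + rot θ u ∉ B} with hU1
  set U2 : Set ℝ := {θ | x + rot θ w ∉ B} with hU2
  have hO1 : IsOpen U1 := hB.isOpen_compl.preimage (rot_cont u x)
  have hO2 : IsOpen U2 := hB.isOpen_compl.preimage (rot_cont w x)
  have hU1c : U1 = U2ᶜ := by
    ext θ
    simp only [hU1, hU2, Set.mem_setOf_eq, Set.mem_compl_iff, not_not]
    constructor
    · exact fun h1 => hd1 θ h1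
    · intro h2 hmem
      rcases hF θ with hh | hh
      · exact hh hmem
      · exact hh h2

  have hclopen : IsClopen U1 := ⟨hU1c ▸ hO2.isClosed_compl, hO1⟩
  rcases isClopen_iff.mp hclopen with h0 | huniv
  · left
    constructor
    · intro θ
      by_contra hc
      exact absurd (show θ ∈ U1 from hc) (by simp [h0])
    · intro θ
      have : θ ∈ U2 := by
        have : θ ∉ U1 := by simp [h0]
        rw [hU1c] at this; simpa using this
      exact this
  · right
    constructor
    · intro θ
      exact hd1 θ (show θ ∈ U1 from huniv ▸ Set.mem_univ θ)
    · intro θ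
      exact (show θ ∈ U1 from huniv ▸ Set.mem_univ θ)

theorem stmt5 (B : Set (EuclideanSpace ℝ (Fin 2))) (hB : IsClosed B)
    (p q r : EuclideanSpace ℝ (Fin 2)) :
    ∃ R : Matrix (Fin 2) (Fin 2) ℝ, R ∈ Matrix.specialOrthogonalGroup (Fin 2) ℝ ∧
      ∃ v : EuclideanSpace ℝ (Fin 2),
        ∀ f : EuclideanSpace ℝ (Fin 2) → EuclideanSpace ℝ (Fin 2),
          (f = fun x => (WithLp.equiv 2 (Fin 2 → ℝ)).symm
              (R.mulVec (WithLp.equiv 2 (Fin 2 → ℝ) x)) + v) →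
          ((f p ∈ B ∧ f q ∈ B ∧ f r ∈ B) ∨ (f p ∉ B ∧ f q ∉ B ∧ f r ∉ B)) := by
  by_contra h
  have key : ∀ (θ : ℝ) (v : E2),
      (¬(rot θ p + v ∈ B ∧ rot θ q + v ∈ B ∧ rot θ r + v ∈ B)) ∧
      (¬(rot θ p + v ∉ B ∧ rot θ q + v ∉ B ∧ rot θ r + v ∉ B)) := by
    intro θ v
    refine ⟨fun hx => h ⟨Rmat θ, Rmat_mem θ, v, fun f hf => ?_⟩,
            fun hx => h ⟨Rmat θ, Rmat_mem θ, v, fun f hf => ?_⟩⟩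
    · subst hf; exact Or.inl hx
    · subst hf; exact Or.inr hx
  -- placements with each vertex at an arbitrary point y
  have place : ∀ (a b c : E2), (a = p ∧ b = q ∧ c = r) ∨ (a = q ∧ b = p ∧ c = r) ∨
      (a = r ∧ b = p ∧ c = q) →
      ∀ (θ : ℝ) (y : E2),
      (¬(y ∈ B ∧ y + rot θ (b - a) ∈ B ∧ y + rot θ (c - a) ∈ B)) ∧
      (¬(y ∉ B ∧ y + rot θ (b - a) ∉ B ∧ y + rot θ (c - a) ∉ B)) := by
    intro a b c habc θ y
    have e1 : rot θ a + (y - rot θ a) = y := by abel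
    have e2 : rot θ b + (y - rot θ a) = y + rot θ (b - a) := by rw [← rot_sub]; abel
    have e3 : rot θ c + (y - rot θ a) = y + rot θ (c - a) := by rw [← rot_sub]; abel
    have hk := key θ (y - rot θ a)
    rcases habc with ⟨ha, hb, hc⟩ | ⟨ha, hb, hc⟩ | ⟨ha, hb, hc⟩ <;> subst ha <;> subst hb <;>
      subst hc <;> rw [e1, e2, e3] at hk <;> try tauto
  have place1 := place p q r (Or.inl ⟨rfl, rfl, rfl⟩)
  have place2 := place q p r (Or.inr (Or.inl ⟨rfl, rfl, rfl⟩))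
  have place3 := place r p q (Or.inr (Or.inr ⟨rfl, rfl, rfl⟩))
  -- B and its complement are nonempty
  have key0 := key 0 0
  rw [rot_zero, rot_zero, rot_zero, add_zero, add_zero, add_zero] at key0
  have hBne : B.Nonempty := by
    by_cases hp : p ∈ B
    · exact ⟨p, hp⟩
    by_cases hq : q ∈ B
    · exact ⟨q, hq⟩
    by_cases hr : r ∈ B
    · exact ⟨r, hr⟩
    exact absurd ⟨hp, hq, hr⟩ key0.2
  have hBcne : Bᶜ.Nonempty := by
    by_cases hp : p ∈ B
    · by_cases hq : q ∈ B
      · by_cases hr : r ∈ B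
        · exact absurd ⟨hp, hq, hr⟩ key0.1
        · exact ⟨r, hr⟩
      · exact ⟨q, hq⟩
    · exact ⟨p, hp⟩
  -- a frontier point
  have hnclopen : ¬ IsClopen B := by
    intro hc
    rcases isClopen_iff.mp hc with h0 | h1
    · rcases hBne with ⟨z, hz⟩; rw [h0] at hz; exact hz
    · rcases hBcne with ⟨z, hz⟩; rw [h1] at hz; exact hz (Set.mem_univ z)
  have hfr : (frontier B).Nonempty := by
    rw [Set.nonempty_iff_ne_empty]
    intro he
    exact hnclopen (isClopen_iff_frontier_eq_empty.mpr he)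
  obtain ⟨x, hxfr⟩ := hfr
  have hxB : x ∈ B := hB.frontier_subset hxfr
  have hxG : x ∈ closure Bᶜ := by
    rw [frontier_eq_closure_inter_closure] at hxfr; exact hxfr.2
  have D1 := apex hB hxB hxG (q - p) (r - p)
    (fun θ => by have := (place1 θ x).1; tauto)
    (fun y hy θ => by have := (place1 θ y).2; tauto)
  have D2 := apex hB hxB hxG (p - q) (r - q)
    (fun θ => by have := (place2 θ x).1; tauto)
    (fun y hy θ => by have := (place2 θ y).2; tauto)
  have D3 := apex hB hxB hxG (p - r) (q - r)
    (fun θ => by have := (place3 θ x).1; tauto)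
    (fun y hy θ => by have := (place3 θ y).2; tauto)
  have eqq : p - q = -(q - p) := by abel
  have eqr : p - r = -(r - p) := by abel
  have eqqr : q - r = -(r - q) := by abel
  rw [eqq, rot_neg_forall_mem, rot_neg_forall_nmem] at D2
  rw [eqr, eqqr, rot_neg_forall_mem, rot_neg_forall_nmem,
    rot_neg_forall_mem, rot_neg_forall_nmem] at D3
  have hPN : ∀ u : E2, (∀ θ : ℝ, x + rot θ u ∈ B) → (∀ θ : ℝ, x + rot θ u ∉ B) → False :=
    fun u h1 h2 => h2 0 (h1 0)
  have f1 := hPN (q - p)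
  have f2 := hPN (r - p)
  have f3 := hPN (r - q)
  tauto

end
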